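/- Let $q_{pNML}(y|x) = \frac{1-x^\top P_N x}{\sqrt{2\pi\sigma^2}} \exp\{-\frac{(1 - x^\top P_N x)^2}{2\sigma^2}(y - \mu)^2\}$ with $0 < x^\top P_N x < 1$ and $\mu = x^\top \theta_N$. Then $q_{pNML}(\cdot|x)$ is the density of a Gaussian with mean $\mu$ and variance $\sigma^2/(1 - x^\top P_N x)^2 = \sigma^2(1 + x^\top(X^\top X)^{-1}x)^2$; in particular it integrates to 1 and its variance exceeds the noise variance $\sigma^2$ by the factor $K^2$ where $\log K$ is the pNML regret. -/

import Mathlib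

open Matrix

set_option maxHeartbeats 1000000

/-- The pNML predictive distribution for under-parameterized linear regression is
a Gaussian with the ERM mean and variance inflated by the factor `K²`:
it integrates to 1, equals the Gaussian density of mean `μ = xᵀθ_N` and variance
`σ²/(1 - xᵀP_Nx)² = σ²(1 + xᵀ(XᵀX)⁻¹x)²`, which strictly exceeds `σ²`. -/
theorem pnml_predictive_is_gaussian {N M : ℕ} (σ : ℝ) (hσ : 0 < σ)
    (X : Matrix (Fin N) (Fin M) ℝ) (hX : IsUnit (Xᵀ * X).det)
    (x θN : Fin M → ℝ)
    (PN : Matrix (Fin M) (Fin M) ℝ)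
    (hPN : PN = (1 + x ⬝ᵥ (Xᵀ * X)⁻¹.mulVec x)⁻¹ • (Xᵀ * X)⁻¹)
    (t : ℝ) (ht : t = x ⬝ᵥ PN.mulVec x) (ht0 : 0 < t) (ht1 : t < 1)
    (μ : ℝ) (hμ : μ = x ⬝ᵥ θN)
    (q : ℝ → ℝ)
    (hq : q = fun y => (1 - t) / Real.sqrt (2 * Real.pi * σ ^ 2) *
      Real.exp (-((1 - t) ^ 2 / (2 * σ ^ 2)) * (y - μ) ^ 2)) :
    (∫ y : ℝ, q y) = 1 ∧
      (∀ y : ℝ, q y = (Real.sqrt (2 * Real.pi * (σ ^ 2 / (1 - t) ^ 2)))⁻¹ *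
        Real.exp (-(y - μ) ^ 2 / (2 * (σ ^ 2 / (1 - t) ^ 2)))) ∧
      σ ^ 2 / (1 - t) ^ 2 = σ ^ 2 * (1 + x ⬝ᵥ (Xᵀ * X)⁻¹.mulVec x) ^ 2 ∧
      σ ^ 2 < σ ^ 2 / (1 - t) ^ 2 := by
  have h1t : 0 < 1 - t := by linarith
  have hσ2 : (0:ℝ) < σ ^ 2 := by positivity
  have hπ := Real.pi_pos
  have hA : 0 < Real.sqrt (2 * Real.pi * σ ^ 2) := Real.sqrt_pos.2 (by positivity)
  set c := x ⬝ᵥ (Xᵀ * X)⁻¹.mulVec x with hc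
  clear_value c
  have htc : t = (1 + c)⁻¹ * c := by
    rw [ht, hPN, Matrix.smul_mulVec, dotProduct_smul, smul_eq_mul, ← hc]
  have h1c : (1 + c) ≠ 0 := by
    intro h
    rw [h] at htc
    simp at htc
    linarith
  have h1mt : 1 - t = (1 + c)⁻¹ := by
    rw [htc]; field_simp; ring
  refine ⟨?_, ?_, ?_, ?_⟩
  · rw [hq]
    have hshift : ∫ y : ℝ, Real.exp (-((1 - t) ^ 2 / (2 * σ ^ 2)) * (y - μ) ^ 2)
        = ∫ y : ℝ, Real.exp (-((1 - t) ^ 2 / (2 * σ ^ 2)) * y ^ 2) :=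
      MeasureTheory.integral_sub_right_eq_self
        (fun y => Real.exp (-((1 - t) ^ 2 / (2 * σ ^ 2)) * y ^ 2)) μ
    rw [MeasureTheory.integral_const_mul, hshift, integral_gaussian]
    have harg : Real.pi / ((1 - t) ^ 2 / (2 * σ ^ 2)) = (2 * Real.pi * σ ^ 2) / (1 - t) ^ 2 := by
      field_simp
    rw [harg, Real.sqrt_div (by positivity : (0:ℝ) ≤ 2 * Real.pi * σ ^ 2),
      Real.sqrt_sq h1t.le]
    field_simp
  · intro y
    simp only [hq]
    have h1 : (Real.sqrt (2 * Real.pi * (σ ^ 2 / (1 - t) ^ 2)))⁻¹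
        = (1 - t) / Real.sqrt (2 * Real.pi * σ ^ 2) := by
      rw [show 2 * Real.pi * (σ ^ 2 / (1 - t) ^ 2) = (2 * Real.pi * σ ^ 2) / (1 - t) ^ 2 by ring,
        Real.sqrt_div (by positivity : (0:ℝ) ≤ 2 * Real.pi * σ ^ 2), Real.sqrt_sq h1t.le]
      field_simp
    have hexp : -((1 - t) ^ 2 / (2 * σ ^ 2)) * (y - μ) ^ 2
        = -(y - μ) ^ 2 / (2 * (σ ^ 2 / (1 - t) ^ 2)) := by
      have hne : (1 - t) ≠ 0 := ne_of_gt h1t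
      have hσne : σ ≠ 0 := ne_of_gt hσ
      field_simp
    rw [h1, hexp]
  · rw [h1mt, inv_pow, div_eq_mul_inv, inv_inv]
  · rw [lt_div_iff₀ (pow_pos h1t 2)]
    nlinarith [mul_pos hσ2 (mul_pos ht0 (by linarith : (0:ℝ) < 2 - t))]
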